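/- Let D₂ be the two-way ET feasible set: all (P_1, P_2, δ_1, δ_2) with P_1^i, P_2^i ≥ 0 (i = 1,…,K+1), δ_1^i, δ_2^i ≥ 0 and δ_1^i·δ_2^i = 0 (i = 0,…,K), such that for all k = 1,…,K+1, ∑_{i=1}^k P_1^i l^i ≤ ∑_{i=0}^{k-1}(E_1^i − δ_1^i + δ_2^i) and ∑_{i=1}^k b²P_2^i l^i ≤ ∑_{i=0}^{k-1}(b²E_2^i − δ_2^i + δ_1^i). Then sup_{(P_1,P_2,δ_1,δ_2) ∈ D₂} F(P_1, P_2) = sup_{P̃_t ∈ T} ∑_{i=1}^{K+1} C(P̃_t^i/N_0)·l^i. Moreover, if P̃_t* attains the right-hand supremum, then with P_1*^i := P̃_t*^i/A and P_2*^i := (A−1)·P̃_t*^i/(A·b²) there exist δ_1*, δ_2* ≥ 0 with δ_1*^i·δ_2*^i = 0 such that (P_1*, P_2*, δ_1*, δ_2*) ∈ D₂ and F(P_1*, P_2*) equals the common supremum. -/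
import Mathlib


/-- `C(x) = log₂(1+x)`. -/
noncomputable def Cfun (x : ℝ) : ℝ := Real.logb 2 (1 + x)

/-- `A = max(1, a²)`. -/
noncomputable def Aval (a : ℝ) : ℝ := max 1 (a ^ 2)

/-- The full-duplex noncoherent DF throughput
`F(P₁,P₂) = ∑_{i=1}^{K+1} min{ C((P₁ⁱ+b²P₂ⁱ)/N₀), C(A·P₁ⁱ/N₀) }·lⁱ`
(epochs indexed `0,…,K`). -/
noncomputable def Fthr (K : ℕ) (l : ℕ → ℝ) (N0 a b : ℝ) (P1 P2 : ℕ → ℝ) : ℝ :=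
  ∑ i ∈ Finset.range (K + 1),
    min (Cfun ((P1 i + b ^ 2 * P2 i) / N0)) (Cfun (Aval a * P1 i / N0)) * l i

/-- The no-ET feasible set `D`: nonnegative powers and energy causality at S and R. -/
def InD (K : ℕ) (l E1 E2 : ℕ → ℝ) (P1 P2 : ℕ → ℝ) : Prop :=
  (∀ i ∈ Finset.range (K + 1), 0 ≤ P1 i ∧ 0 ≤ P2 i) ∧
  (∀ k, 1 ≤ k → k ≤ K + 1 →
    ∑ i ∈ Finset.range k, P1 i * l i ≤ ∑ i ∈ Finset.range k, E1 i) ∧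
  (∀ k, 1 ≤ k → k ≤ K + 1 →
    ∑ i ∈ Finset.range k, P2 i * l i ≤ ∑ i ∈ Finset.range k, E2 i)

/-- The total-power feasible set `T` for total energies `Et`. -/
def InT (K : ℕ) (l Et : ℕ → ℝ) (Pt : ℕ → ℝ) : Prop :=
  (∀ i ∈ Finset.range (K + 1), 0 ≤ Pt i) ∧
  (∀ k, 1 ≤ k → k ≤ K + 1 →
    ∑ i ∈ Finset.range k, Pt i * l i ≤ ∑ i ∈ Finset.range k, Et i)

/-- The two-way ET feasible set `D₂`: nonnegative powers, nonnegative half-duplex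
transfers, and energy causality at S and R with transfers. -/
def InD2 (K : ℕ) (l E1 E2 : ℕ → ℝ) (b : ℝ) (P1 P2 δ1 δ2 : ℕ → ℝ) : Prop :=
  (∀ i ∈ Finset.range (K + 1), 0 ≤ P1 i ∧ 0 ≤ P2 i) ∧
  (∀ i ∈ Finset.range (K + 1), 0 ≤ δ1 i ∧ 0 ≤ δ2 i ∧ δ1 i * δ2 i = 0) ∧
  (∀ k, 1 ≤ k → k ≤ K + 1 →
    ∑ i ∈ Finset.range k, P1 i * l i ≤
      ∑ i ∈ Finset.range k, (E1 i - δ1 i + δ2 i)) ∧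
  (∀ k, 1 ≤ k → k ≤ K + 1 →
    ∑ i ∈ Finset.range k, b ^ 2 * P2 i * l i ≤
      ∑ i ∈ Finset.range k, (b ^ 2 * E2 i - δ2 i + δ1 i))

/-- Theorem 1: the two-way ET problem has the same optimal value as the
single-user total-energy problem, and any maximizer `P̃ₜ*` of the latter yields, via
`P₁*ⁱ = P̃ₜ*ⁱ/A` and `P₂*ⁱ = (A−1)P̃ₜ*ⁱ/(A·b²)`, an optimal feasible point of the former. -/
lemma max_sub_max_neg (d : ℝ) : max d 0 - max (-d) 0 = d := by
  rcases le_total d 0 with h | h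
  · rw [max_eq_right h, max_eq_left (by linarith)]; ring
  · rw [max_eq_left h, max_eq_right (by linarith)]; ring

lemma max_neg_mul_max (d : ℝ) : max (-d) 0 * max d 0 = 0 := by
  rcases le_total d 0 with h | h
  · rw [max_eq_right h, mul_zero]
  · rw [max_eq_right (neg_nonpos.mpr h), zero_mul]

lemma construct (K : ℕ) (l E1 E2 : ℕ → ℝ) (N0 a b : ℝ)
    (hl : ∀ i ∈ Finset.range (K + 1), 0 < l i)
    (hb : b ≠ 0)
    (Pt : ℕ → ℝ) (hPt : InT K l (fun i => E1 i + b ^ 2 * E2 i) Pt) :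
    ∃ δ1 δ2 : ℕ → ℝ,
      (∀ i ∈ Finset.range (K + 1), 0 ≤ δ1 i ∧ 0 ≤ δ2 i ∧ δ1 i * δ2 i = 0) ∧
      InD2 K l E1 E2 b (fun i => Pt i / Aval a)
        (fun i => (Aval a - 1) * Pt i / (Aval a * b ^ 2)) δ1 δ2 ∧
      Fthr K l N0 a b (fun i => Pt i / Aval a)
          (fun i => (Aval a - 1) * Pt i / (Aval a * b ^ 2)) =
        ∑ i ∈ Finset.range (K + 1), Cfun (Pt i / N0) * l i := by
  obtain ⟨hPt0, hPtc⟩ := hPt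
  have hA1 : (1 : ℝ) ≤ Aval a := le_max_left _ _
  have hA0 : (0 : ℝ) < Aval a := lt_of_lt_of_le one_pos hA1
  have hb2 : (0 : ℝ) < b ^ 2 := by positivity
  set P1 : ℕ → ℝ := fun i => Pt i / Aval a with hP1def
  set P2 : ℕ → ℝ := fun i => (Aval a - 1) * Pt i / (Aval a * b ^ 2) with hP2def
  -- pointwise identities
  have hsplit : ∀ i, P1 i * l i + b ^ 2 * P2 i * l i = Pt i * l i := by
    intro i
    simp only [hP1def, hP2def]
    field_simp
    ring
  have hkey : ∀ k, 1 ≤ k → k ≤ K + 1 →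
      (∑ i ∈ Finset.range k, P1 i * l i) + ∑ i ∈ Finset.range k, b ^ 2 * P2 i * l i ≤
        (∑ i ∈ Finset.range k, E1 i) + ∑ i ∈ Finset.range k, b ^ 2 * E2 i := by
    intro k hk1 hk2
    have := hPtc k hk1 hk2
    calc (∑ i ∈ Finset.range k, P1 i * l i) + ∑ i ∈ Finset.range k, b ^ 2 * P2 i * l i
        = ∑ i ∈ Finset.range k, Pt i * l i := by
          rw [← Finset.sum_add_distrib]
          exact Finset.sum_congr rfl fun i _ => hsplit i
      _ ≤ ∑ i ∈ Finset.range k, (E1 i + b ^ 2 * E2 i) := this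
      _ = _ := Finset.sum_add_distrib
  -- the cumulative transfer
  set T : ℕ → ℝ := fun k =>
    max ((∑ i ∈ Finset.range k, P1 i * l i) - ∑ i ∈ Finset.range k, E1 i)
      (min 0 ((∑ i ∈ Finset.range k, b ^ 2 * E2 i) - ∑ i ∈ Finset.range k, b ^ 2 * P2 i * l i))
    with hTdef
  have hT0 : T 0 = 0 := by simp [hTdef]
  refine ⟨fun i => max (-(T (i + 1) - T i)) 0, fun i => max (T (i + 1) - T i) 0, ?_, ?_, ?_⟩
  · intro i _
    exact ⟨le_max_right _ _, le_max_right _ _, max_neg_mul_max _⟩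
  · refine ⟨?_, ?_, ?_, ?_⟩
    · intro i hi
      have := hPt0 i hi
      constructor
      · exact div_nonneg this (le_of_lt hA0)
      · apply div_nonneg (mul_nonneg (by linarith) this) (le_of_lt (by positivity))
    · intro i _
      exact ⟨le_max_right _ _, le_max_right _ _, max_neg_mul_max _⟩
    · intro k hk1 hk2
      have hsum : ∑ i ∈ Finset.range k,
          (E1 i - max (-(T (i + 1) - T i)) 0 + max (T (i + 1) - T i) 0) =
          (∑ i ∈ Finset.range k, E1 i) + T k := by
        have : ∀ i, E1 i - max (-(T (i + 1) - T i)) 0 + max (T (i + 1) - T i) 0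
            = E1 i + (T (i + 1) - T i) := by
          intro i
          have := max_sub_max_neg (T (i + 1) - T i)
          linarith
        rw [Finset.sum_congr rfl fun i _ => this i, Finset.sum_add_distrib,
          Finset.sum_range_sub, hT0]
        ring
      rw [hsum]
      have : (∑ i ∈ Finset.range k, P1 i * l i) - ∑ i ∈ Finset.range k, E1 i ≤ T k :=
        le_max_left _ _
      linarith
    · intro k hk1 hk2
      have hsum : ∑ i ∈ Finset.range k,
          (b ^ 2 * E2 i - max (T (i + 1) - T i) 0 + max (-(T (i + 1) - T i)) 0) =
          (∑ i ∈ Finset.range k, b ^ 2 * E2 i) - T k := by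
        have : ∀ i, b ^ 2 * E2 i - max (T (i + 1) - T i) 0 + max (-(T (i + 1) - T i)) 0
            = b ^ 2 * E2 i - (T (i + 1) - T i) := by
          intro i
          have := max_sub_max_neg (T (i + 1) - T i)
          linarith
        rw [Finset.sum_congr rfl fun i _ => this i, Finset.sum_sub_distrib,
          Finset.sum_range_sub, hT0]
        ring
      rw [hsum]
      have hTk : T k ≤ (∑ i ∈ Finset.range k, b ^ 2 * E2 i) -
          ∑ i ∈ Finset.range k, b ^ 2 * P2 i * l i := by
        apply max_le
        · have := hkey k hk1 hk2
          linarith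
        · exact min_le_right _ _
      linarith
  · apply Finset.sum_congr rfl
    intro i _
    have h1 : P1 i + b ^ 2 * P2 i = Pt i := by
      simp only [hP1def, hP2def]; field_simp; ring
    have h2 : Aval a * P1 i = Pt i := by
      simp only [hP1def]; field_simp
    rw [h1, h2, min_self]

lemma sSup_eq_of_dom (S T : Set ℝ) (hne : T.Nonempty) (hsub : T ⊆ S)
    (hdom : ∀ x ∈ S, ∃ y ∈ T, x ≤ y) : sSup S = sSup T := by
  by_cases hbdd : BddAbove T
  · have hbS : BddAbove S := by
      obtain ⟨M, hM⟩ := hbdd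
      exact ⟨M, fun x hx => by
        obtain ⟨y, hyT, hxy⟩ := hdom x hx
        exact hxy.trans (hM hyT)⟩
    have hSne : S.Nonempty := hne.mono hsub
    apply le_antisymm
    · apply csSup_le hSne
      intro x hx
      obtain ⟨y, hyT, hxy⟩ := hdom x hx
      exact hxy.trans (le_csSup hbdd hyT)
    · exact csSup_le_csSup hbS hne hsub
  · have hbS : ¬ BddAbove S := fun hS => hbdd (hS.mono hsub)
    rw [Real.sSup_of_not_bddAbove hbS, Real.sSup_of_not_bddAbove hbdd]

theorem stmt_6 (K : ℕ) (l E1 E2 : ℕ → ℝ) (N0 a b : ℝ)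
    (hl : ∀ i ∈ Finset.range (K + 1), 0 < l i)
    (hE1 : ∀ i ∈ Finset.range (K + 1), 0 ≤ E1 i)
    (hE2 : ∀ i ∈ Finset.range (K + 1), 0 ≤ E2 i)
    (hN0 : 0 < N0) (hb : b ≠ 0) :
    sSup {y : ℝ | ∃ P1 P2 δ1 δ2 : ℕ → ℝ, InD2 K l E1 E2 b P1 P2 δ1 δ2 ∧
        y = Fthr K l N0 a b P1 P2} =
      sSup {y : ℝ | ∃ Pt : ℕ → ℝ, InT K l (fun i => E1 i + b ^ 2 * E2 i) Pt ∧
        y = ∑ i ∈ Finset.range (K + 1), Cfun (Pt i / N0) * l i} ∧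
    (∀ Pts : ℕ → ℝ,
      IsGreatest {y : ℝ | ∃ Pt : ℕ → ℝ, InT K l (fun i => E1 i + b ^ 2 * E2 i) Pt ∧
          y = ∑ i ∈ Finset.range (K + 1), Cfun (Pt i / N0) * l i}
        (∑ i ∈ Finset.range (K + 1), Cfun (Pts i / N0) * l i) →
      InT K l (fun i => E1 i + b ^ 2 * E2 i) Pts →
      ∃ δ1 δ2 : ℕ → ℝ,
        (∀ i ∈ Finset.range (K + 1), 0 ≤ δ1 i ∧ 0 ≤ δ2 i ∧ δ1 i * δ2 i = 0) ∧
        InD2 K l E1 E2 b (fun i => Pts i / Aval a)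
          (fun i => (Aval a - 1) * Pts i / (Aval a * b ^ 2)) δ1 δ2 ∧
        Fthr K l N0 a b (fun i => Pts i / Aval a)
            (fun i => (Aval a - 1) * Pts i / (Aval a * b ^ 2)) =
          sSup {y : ℝ | ∃ Pt : ℕ → ℝ, InT K l (fun i => E1 i + b ^ 2 * E2 i) Pt ∧
            y = ∑ i ∈ Finset.range (K + 1), Cfun (Pt i / N0) * l i}) := by

  have hb2 : (0 : ℝ) < b ^ 2 := by positivity
  set Tset : Set ℝ := {y : ℝ | ∃ Pt : ℕ → ℝ, InT K l (fun i => E1 i + b ^ 2 * E2 i) Pt ∧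
      y = ∑ i ∈ Finset.range (K + 1), Cfun (Pt i / N0) * l i} with hTset
  set Sset : Set ℝ := {y : ℝ | ∃ P1 P2 δ1 δ2 : ℕ → ℝ, InD2 K l E1 E2 b P1 P2 δ1 δ2 ∧
      y = Fthr K l N0 a b P1 P2} with hSset
  have hne : Tset.Nonempty := by
    refine ⟨0, fun _ => 0, ⟨fun i _ => le_refl 0, ?_⟩, ?_⟩
    · intro k hk1 hk2
      simp only [zero_mul, Finset.sum_const_zero]
      apply Finset.sum_nonneg
      intro i hi
      have hi' : i ∈ Finset.range (K + 1) :=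
        Finset.range_subset_range.mpr hk2 hi
      exact add_nonneg (hE1 i hi') (mul_nonneg (le_of_lt hb2) (hE2 i hi'))
    · simp [Cfun]
  have hsub : Tset ⊆ Sset := by
    rintro y ⟨Pt, hPt, rfl⟩
    obtain ⟨δ1, δ2, _, hD2, hF⟩ := construct K l E1 E2 N0 a b hl hb Pt hPt
    exact ⟨_, _, δ1, δ2, hD2, hF.symm⟩
  have hdom : ∀ x ∈ Sset, ∃ y ∈ Tset, x ≤ y := by
    rintro x ⟨P1, P2, δ1, δ2, ⟨hP, hδ, hc1, hc2⟩, rfl⟩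
    refine ⟨∑ i ∈ Finset.range (K + 1), Cfun ((P1 i + b ^ 2 * P2 i) / N0) * l i,
      ⟨fun i => P1 i + b ^ 2 * P2 i, ⟨?_, ?_⟩, rfl⟩, ?_⟩
    · intro i hi
      exact add_nonneg (hP i hi).1 (mul_nonneg (le_of_lt hb2) (hP i hi).2)
    · intro k hk1 hk2
      have h1 := hc1 k hk1 hk2
      have h2 := hc2 k hk1 hk2
      have ha : ∑ i ∈ Finset.range k, (P1 i + b ^ 2 * P2 i) * l i =
          (∑ i ∈ Finset.range k, P1 i * l i) +
            ∑ i ∈ Finset.range k, b ^ 2 * P2 i * l i := by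
        rw [← Finset.sum_add_distrib]
        exact Finset.sum_congr rfl fun i _ => by ring
      have hbsum : (∑ i ∈ Finset.range k, (E1 i - δ1 i + δ2 i)) +
          ∑ i ∈ Finset.range k, (b ^ 2 * E2 i - δ2 i + δ1 i) =
          ∑ i ∈ Finset.range k, (E1 i + b ^ 2 * E2 i) := by
        rw [← Finset.sum_add_distrib]
        exact Finset.sum_congr rfl fun i _ => by ring
      calc ∑ i ∈ Finset.range k, (P1 i + b ^ 2 * P2 i) * l i
          = _ := ha
        _ ≤ (∑ i ∈ Finset.range k, (E1 i - δ1 i + δ2 i)) +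
            ∑ i ∈ Finset.range k, (b ^ 2 * E2 i - δ2 i + δ1 i) := add_le_add h1 h2
        _ = _ := hbsum
    · apply Finset.sum_le_sum
      intro i hi
      exact mul_le_mul_of_nonneg_right (min_le_left _ _) (hl i hi).le
  refine ⟨sSup_eq_of_dom Sset Tset hne hsub hdom, ?_⟩
  intro Pts hG hInT
  obtain ⟨δ1, δ2, hδ, hD2, hF⟩ := construct K l E1 E2 N0 a b hl hb Pts hInT
  exact ⟨δ1, δ2, hδ, hD2, hF.trans hG.csSup_eq.symm⟩
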